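/- arXiv:1012.3260 — 5 statements merged into one kernel-verified Lean document; each statement's English description precedes it below -/
import Mathlib

section
/- Let M and N be loopfree matroids on the same ground set E such that every flat of N is also a flat of M. Then for any subsets A ⊆ B of E, rank_M(A) − rank_N(A) ≤ rank_M(B) − rank_N(B). -/
/-- A matroid given by its rank function on subsets of a finite ground set. -/
structure MatroidRank (α : Type) [DecidableEq α] [Fintype α] where
  r : Finset α → ℕ
  r_empty : r ∅ = 0
  r_le_insert : ∀ A x, r A ≤ r (insert x A)
  insert_le : ∀ A x, r (insert x A) ≤ r A + 1
  r_local : ∀ A x y, r (insert x A) = r A → r (insert y A) = r A →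
    r (insert x (insert y A)) = r A

variable {α : Type} [DecidableEq α] [Fintype α]

/-- `F` is a flat (closed set) of the matroid `M`. -/
def MatroidRank.IsFlat (M : MatroidRank α) (F : Finset α) : Prop :=
  ∀ x ∉ F, M.r F < M.r (insert x F)

/-- Closure of a set in the matroid `M`. -/
def MatroidRank.cl (M : MatroidRank α) (A : Finset α) : Finset α :=
  Finset.univ.filter (fun x => M.r (insert x A) = M.r A)

/-- The matroid `M` has no loops. -/
def MatroidRank.Loopfree (M : MatroidRank α) : Prop :=
  ∀ x : α, M.r {x} = 1

namespace MatroidRank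

lemma r_union_le (M : MatroidRank α) (A S : Finset α) : M.r A ≤ M.r (A ∪ S) := by
  induction S using Finset.induction with
  | empty => simp
  | @insert y S hy ih =>
      rw [Finset.union_insert]
      exact le_trans ih (M.r_le_insert _ _)

lemma r_mono (M : MatroidRank α) {A B : Finset α} (h : A ⊆ B) : M.r A ≤ M.r B := by
  have := M.r_union_le A (B \ A)
  rwa [Finset.union_sdiff_of_subset h] at this

lemma cl_step (M : MatroidRank α) (A : Finset α) (x y : α)
    (h : M.r (insert x A) = M.r A) :
    M.r (insert x (insert y A)) = M.r (insert y A) := by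
  rcases eq_or_ne (M.r (insert y A)) (M.r A) with h' | h'
  · rw [M.r_local A x y h h', h']
  · have h1 := M.r_le_insert A y
    have h2 := M.insert_le A y
    have hy : M.r (insert y A) = M.r A + 1 := by omega
    have h3 : M.r (insert y (insert x A)) ≤ M.r (insert x A) + 1 := M.insert_le _ _
    rw [Finset.insert_comm] at h3
    have h4 : M.r (insert y A) ≤ M.r (insert x (insert y A)) := by
      rw [Finset.insert_comm]
      exact M.r_mono (Finset.insert_subset_insert y (Finset.subset_insert x A))
    omega

lemma cl_superset (M : MatroidRank α) {A B : Finset α} (x : α) (hAB : A ⊆ B)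
    (h : M.r (insert x A) = M.r A) : M.r (insert x B) = M.r B := by
  have key : ∀ S : Finset α, M.r (insert x (A ∪ S)) = M.r (A ∪ S) := by
    intro S
    induction S using Finset.induction with
    | empty => simpa using h
    | @insert y S hy ih =>
        rw [Finset.union_insert]
        exact M.cl_step (A ∪ S) x y ih
  have := key (B \ A)
  rwa [Finset.union_sdiff_of_subset hAB] at this

lemma subset_cl (M : MatroidRank α) (A : Finset α) : A ⊆ M.cl A := by
  intro x hx
  simp only [cl, Finset.mem_filter, Finset.mem_univ, true_and]
  rw [Finset.insert_eq_self.mpr hx]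

lemma r_cl (M : MatroidRank α) (A : Finset α) : M.r (M.cl A) = M.r A := by
  have key : ∀ S : Finset α, (∀ y ∈ S, M.r (insert y A) = M.r A) →
      M.r (A ∪ S) = M.r A := by
    intro S
    induction S using Finset.induction with
    | empty => simp
    | @insert y S hy ih =>
        intro hmem
        rw [Finset.union_insert]
        have h1 : M.r (insert y A) = M.r A := hmem y (Finset.mem_insert_self y S)
        have h2 := M.cl_superset y (Finset.subset_union_left (s₁ := A) (s₂ := S)) h1
        rw [h2, ih (fun z hz => hmem z (Finset.mem_insert_of_mem hz))]
  have := key (M.cl A) (by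
    intro y hy
    simpa [cl] using hy)
  rwa [Finset.union_eq_right.mpr (M.subset_cl A)] at this

lemma cl_isFlat (M : MatroidRank α) (A : Finset α) : M.IsFlat (M.cl A) := by
  intro x hx
  simp only [cl, Finset.mem_filter, Finset.mem_univ, true_and] at hx
  have h1 := M.r_le_insert A x
  have h2 := M.insert_le A x
  have hx1 : M.r (insert x A) = M.r A + 1 := by omega
  have h3 : M.r (insert x A) ≤ M.r (insert x (M.cl A)) :=
    M.r_mono (Finset.insert_subset_insert x (M.subset_cl A))
  rw [M.r_cl]
  omega

end MatroidRank

/-- If every flat of N is a flat of M, then for A ⊆ B,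
rank_M(A) − rank_N(A) ≤ rank_M(B) − rank_N(B). -/
theorem rank_diff_mono (M N : MatroidRank α)
    (hM : M.Loopfree) (hN : N.Loopfree)
    (hflats : ∀ F, N.IsFlat F → M.IsFlat F)
    (A B : Finset α) (hAB : A ⊆ B) :
    (M.r A : ℤ) - N.r A ≤ (M.r B : ℤ) - N.r B := by
  -- key single-step lemma
  have step : ∀ (C : Finset α) (x : α),
      (M.r C : ℤ) - N.r C ≤ (M.r (insert x C) : ℤ) - N.r (insert x C) := by
    intro C x
    rcases eq_or_ne (M.r (insert x C)) (M.r C) with h | h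
    · -- then x ∈ cl_M C ⊆ cl_N C, so N rank also unchanged
      have hFlat : M.IsFlat (N.cl C) := hflats _ (N.cl_isFlat C)
      have hxC : x ∈ N.cl C := by
        by_contra hx
        have hlt := hFlat x hx
        have := M.cl_superset x (N.subset_cl C) h
        omega
      have hNx : N.r (insert x C) = N.r C := by
        simpa [MatroidRank.cl] using hxC
      rw [h, hNx]
    · have h1 := M.r_le_insert C x
      have h2 := M.insert_le C x
      have h3 := N.r_le_insert C x
      have h4 := N.insert_le C x
      omega
  have key : ∀ S : Finset α,
      (M.r A : ℤ) - N.r A ≤ (M.r (A ∪ S) : ℤ) - N.r (A ∪ S) := by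
    intro S
    induction S using Finset.induction with
    | empty => simp
    | @insert y S hy ih =>
        rw [Finset.union_insert]
        exact le_trans ih (step (A ∪ S) y)
  have := key (B \ A)
  rwa [Finset.union_sdiff_of_subset hAB] at this
end

section
/- Let M and N be matroids of ranks r and s on the same ground set E such that every flat of N is a flat of M, and let Q be the matroid on E ⊔ R (with |R| = r − s) whose rank function is rank_Q(I ⊔ J) = min{rank_M(I) + |J|, rank_N(I) + r − s}. Then Q \ R = M and Q / R = N, i.e. N is a quotient of M. -/
variable {α : Type} [DecidableEq α] [Fintype α]

/-- the part of a subset of a disjoint union lying in the first factor. -/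
def leftPart {β : Type} [DecidableEq β] [Fintype β] (S : Finset (α ⊕ β)) : Finset α :=
  Finset.univ.filter (fun a => Sum.inl a ∈ S)

/-- the part of a subset of a disjoint union lying in the second factor. -/
def rightPart {β : Type} [DecidableEq β] [Fintype β] (S : Finset (α ⊕ β)) : Finset β :=
  Finset.univ.filter (fun b => Sum.inr b ∈ S)

lemma MatroidRank.mono_union (M : MatroidRank α) (A C : Finset α) :
    M.r A ≤ M.r (A ∪ C) := by
  induction C using Finset.induction_on with
  | empty => simp
  | @insert z C' hz ih =>
      rw [Finset.union_insert]
      exact le_trans ih (M.r_le_insert _ z)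

lemma MatroidRank.mono (M : MatroidRank α) {A B : Finset α} (h : A ⊆ B) :
    M.r A ≤ M.r B := by
  have := M.mono_union A B
  rwa [Finset.union_eq_right.mpr h] at this

lemma MatroidRank.cl_insert_union (M : MatroidRank α) {A : Finset α} {x : α}
    (h : M.r (insert x A) = M.r A) (C : Finset α) :
    M.r (insert x (A ∪ C)) = M.r (A ∪ C) := by
  induction C using Finset.induction_on with
  | empty => simpa
  | @insert z C' hz ih =>
      rw [Finset.union_insert]
      by_cases hzc : M.r (insert z (A ∪ C')) = M.r (A ∪ C')
      · have := M.r_local (A ∪ C') x z ih hzc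
        rw [hzc]
        exact this
      · have h1 : M.r (insert z (A ∪ C')) = M.r (A ∪ C') + 1 := by
          have := M.insert_le (A ∪ C') z
          have := M.r_le_insert (A ∪ C') z
          omega
        have hlow : M.r (insert z (A ∪ C')) ≤ M.r (insert x (insert z (A ∪ C'))) :=
          M.r_le_insert _ x
        have hup : M.r (insert x (insert z (A ∪ C'))) ≤ M.r (insert x (A ∪ C')) + 1 := by
          rw [Finset.insert_comm]
          exact M.insert_le _ z
        omega

lemma MatroidRank.subset_cl_s3 (M : MatroidRank α) (A : Finset α) : A ⊆ M.cl A := by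
  intro x hx
  simp [MatroidRank.cl, Finset.insert_eq_self.mpr hx]

lemma MatroidRank.insert_mem_cl_iff (M : MatroidRank α) {A : Finset α} {x : α} :
    x ∈ M.cl A ↔ M.r (insert x A) = M.r A := by
  simp [MatroidRank.cl]

lemma MatroidRank.r_cl_s3 (M : MatroidRank α) (A : Finset α) : M.r (M.cl A) = M.r A := by
  have habs : ∀ B : Finset α, (∀ x ∈ B, M.r (insert x A) = M.r A) → M.r (A ∪ B) = M.r A := by
    intro B
    induction B using Finset.induction_on with
    | empty => simp
    | @insert z B' hz ih =>
        intro hB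
        rw [Finset.union_insert,
          M.cl_insert_union (hB z (Finset.mem_insert_self z B')) B',
          ih (fun x hx => hB x (Finset.mem_insert_of_mem hx))]
  have := habs (M.cl A) (fun x hx => M.insert_mem_cl_iff.mp hx)
  rwa [Finset.union_eq_right.mpr (M.subset_cl_s3 A)] at this

lemma MatroidRank.cl_isFlat_s3 (M : MatroidRank α) (A : Finset α) : M.IsFlat (M.cl A) := by
  intro y hy
  refine lt_of_le_of_ne (M.r_le_insert _ y) (fun heq => hy ?_)
  have h1 : M.r (insert y (M.cl A)) = M.r A := by rw [← heq, M.r_cl_s3]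
  have h2 : M.r (insert y A) = M.r A := by
    have hle : M.r (insert y A) ≤ M.r (insert y (M.cl A)) :=
      M.mono (Finset.insert_subset_insert y (M.subset_cl_s3 A))
    have := M.r_le_insert A y
    omega
  exact M.insert_mem_cl_iff.mpr h2

/-- From the flats hypothesis: M-closure relations transfer to N. -/
lemma MatroidRank.transfer (M N : MatroidRank α)
    (hflats : ∀ F, N.IsFlat F → M.IsFlat F) {A : Finset α} {x : α}
    (h : M.r (insert x A) = M.r A) : N.r (insert x A) = N.r A := by
  set F := N.cl A with hF
  have hsub : A ⊆ F := N.subset_cl_s3 A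
  have hMF : M.IsFlat F := hflats F (N.cl_isFlat_s3 A)
  by_cases hxF : x ∈ F
  · exact N.insert_mem_cl_iff.mp hxF
  · exfalso
    have := M.cl_insert_union h F
    rw [Finset.union_eq_right.mpr hsub] at this
    exact absurd this (Nat.ne_of_gt (hMF x hxF))

lemma MatroidRank.diff (M N : MatroidRank α)
    (hflats : ∀ F, N.IsFlat F → M.IsFlat F) (C : Finset α) :
    ∀ A : Finset α, N.r (A ∪ C) + M.r A ≤ M.r (A ∪ C) + N.r A := by
  induction C using Finset.induction_on with
  | empty => intro A; simp [Nat.add_comm]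
  | @insert z C' hz ih =>
      intro A
      have h1 := ih (insert z A)
      rw [Finset.insert_union] at h1
      rw [Finset.union_insert]
      have h2 : N.r (insert z A) + M.r A ≤ M.r (insert z A) + N.r A := by
        by_cases hm : M.r (insert z A) = M.r A
        · rw [hm, MatroidRank.transfer M N hflats hm]
          omega
        · have := M.r_le_insert A z
          have := M.insert_le A z
          have := N.insert_le A z
          omega
      omega

/-- For Q with rank function min{rank_M(I)+|J|, rank_N(I)+(r−s)} on E ⊔ R we have
Q \ R = M and Q / R = N, i.e. N is a quotient of M. -/
theorem quotient_construction_del_contr (M N : MatroidRank α)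
    (hflats : ∀ F, N.IsFlat F → M.IsFlat F)
    (β : Type) [DecidableEq β] [Fintype β]
    (hcard : Fintype.card β + N.r Finset.univ = M.r Finset.univ)
    (Q : MatroidRank (α ⊕ β))
    (hQ : ∀ S : Finset (α ⊕ β),
      Q.r S = min (M.r (leftPart S) + (rightPart S).card)
        (N.r (leftPart S) + Fintype.card β)) :
    (∀ A : Finset α, Q.r (A.image Sum.inl) = M.r A) ∧
    (∀ A : Finset α,
      Q.r (A.image Sum.inl ∪ (Finset.univ : Finset β).image Sum.inr)
        = N.r A + Q.r ((Finset.univ : Finset β).image Sum.inr)) := by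
  have hdiff : ∀ A : Finset α, N.r Finset.univ + M.r A ≤ M.r Finset.univ + N.r A := by
    intro A
    have := MatroidRank.diff M N hflats Finset.univ A
    rwa [Finset.union_eq_right.mpr (Finset.subset_univ A)] at this
  have hNle : ∀ A : Finset α, N.r A ≤ M.r A := by
    intro A
    have := MatroidRank.diff M N hflats A ∅
    simpa [M.r_empty, N.r_empty] using this
  have hleft1 : ∀ A : Finset α, leftPart (β := β) (A.image Sum.inl) = A := by
    intro A; ext a; simp [leftPart]
  have hright1 : ∀ A : Finset α, rightPart (A.image Sum.inl) = (∅ : Finset β) := by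
    intro A; ext b; simp [rightPart]
  have hleft2 : ∀ A : Finset α,
      leftPart (A.image Sum.inl ∪ (Finset.univ : Finset β).image Sum.inr) = A := by
    intro A; ext a; simp [leftPart]
  have hright2 : ∀ A : Finset α,
      rightPart (A.image Sum.inl ∪ (Finset.univ : Finset β).image Sum.inr)
        = (Finset.univ : Finset β) := by
    intro A; ext b; simp [rightPart]
  have hQR : Q.r ((Finset.univ : Finset β).image Sum.inr) = Fintype.card β := by
    have := hQ (((∅ : Finset α).image Sum.inl) ∪ (Finset.univ : Finset β).image Sum.inr)
    rw [hleft2, hright2] at this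
    simpa [M.r_empty, N.r_empty, Finset.card_univ] using this
  constructor
  · intro A
    rw [hQ, hleft1, hright1]
    have h1 := hdiff A
    simp only [Finset.card_empty, Nat.add_zero]
    omega
  · intro A
    rw [hQ, hleft2, hright2, hQR, Finset.card_univ]
    have := hNle A
    omega
end

section
/- Let M and N be matroids of ranks r and s on the ground set E such that every flat of N is a flat of M. For 0 ≤ i ≤ r − s define M_i by rank_{M_i}(A) = min{rank_N(A) + i, rank_M(A)}. Then each M_i is a matroid of rank s + i, M_0 = N, M_{r−s} = M, and for i ≤ j every flat of M_i is a flat of M_j. -/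
variable {α : Type} [DecidableEq α] [Fintype α]

namespace MatroidRank

lemma r_le_union (M : MatroidRank α) (C A : Finset α) : M.r A ≤ M.r (A ∪ C) := by
  induction C using Finset.induction_on generalizing A with
  | empty => simp
  | insert _ _ h ih =>
    rw [Finset.union_insert]
    exact le_trans (ih A) (M.r_le_insert _ _)

lemma insert_of_subset (M : MatroidRank α) {A : Finset α} {x : α}
    (hx : M.r (insert x A) = M.r A) {B : Finset α} (hAB : A ⊆ B) :
    M.r (insert x B) = M.r B := by
  have key : ∀ C : Finset α, M.r (insert x (A ∪ C)) = M.r (A ∪ C) := by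
    intro C
    induction C using Finset.induction_on with
    | empty => simpa using hx
    | @insert y C hy ih =>
      rw [Finset.union_insert]
      set B' := A ∪ C with hB'
      have h1 := M.r_le_insert B' y
      have h2 := M.insert_le B' y
      by_cases hyB : M.r (insert y B') = M.r B'
      · have := M.r_local B' x y ih hyB
        omega
      · have hy1 : M.r (insert y B') = M.r B' + 1 := by omega
        have hcomm : insert x (insert y B') = insert y (insert x B') :=
          Finset.insert_comm x y B'
        have h3 := M.r_le_insert (insert y B') x
        have h4 : M.r (insert y (insert x B')) ≤ M.r (insert x B') + 1 :=
          M.insert_le _ _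
        have h5 : M.r (insert x (insert y B')) = M.r (insert y (insert x B')) := by
          rw [hcomm]
        have h6 := M.r_le_insert B' x
        omega
  have := key B
  rwa [Finset.union_eq_right.mpr hAB] at this

lemma r_union_eq (M : MatroidRank α) {A C : Finset α}
    (h : ∀ c ∈ C, M.r (insert c A) = M.r A) : M.r (A ∪ C) = M.r A := by
  induction C using Finset.induction_on with
  | empty => simp
  | @insert y C hy ih =>
    rw [Finset.union_insert]
    have h1 : M.r (A ∪ C) = M.r A := ih (fun c hc => h c (Finset.mem_insert_of_mem hc))
    have h2 : M.r (insert y (A ∪ C)) = M.r (A ∪ C) :=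
      M.insert_of_subset (h y (Finset.mem_insert_self y C)) Finset.subset_union_left
    omega

/-- The key "quotient" step: if every flat of N is a flat of M and x does not
increase the M-rank of A, then it does not increase the N-rank of A. -/
lemma quotient_step (M N : MatroidRank α)
    (hflats : ∀ F, N.IsFlat F → M.IsFlat F) (A : Finset α) (x : α)
    (h : M.r (insert x A) = M.r A) : N.r (insert x A) = N.r A := by
  set F := N.cl A with hF
  have hmem : ∀ z, z ∈ F ↔ N.r (insert z A) = N.r A := by
    intro z; simp [hF, MatroidRank.cl]
  have hAF : A ⊆ F := by
    intro a ha
    rw [hmem]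
    rw [Finset.insert_eq_self.mpr ha]
  have hrF : N.r F = N.r A := by
    have := N.r_union_eq (A := A) (C := F) (fun c hc => (hmem c).mp hc)
    rwa [Finset.union_eq_right.mpr hAF] at this
  have hFlatN : N.IsFlat F := by
    intro z hz
    have hz' : N.r (insert z A) ≠ N.r A := fun hc => hz ((hmem z).mpr hc)
    have h1 := N.r_le_insert A z
    have h2 := N.insert_le A z
    have h3 : N.r (insert z A) = N.r A + 1 := by omega
    have h4 : N.r (insert z A) ≤ N.r (insert z F) :=
      N.r_mono (Finset.insert_subset_insert z hAF)
    omega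
  have hFlatM : M.IsFlat F := hflats F hFlatN
  by_cases hxF : x ∈ F
  · exact (hmem x).mp hxF
  · exfalso
    have h1 := hFlatM x hxF
    have h2 : M.r (insert x F) = M.r F := M.insert_of_subset h hAF
    omega

lemma N_le_M (M N : MatroidRank α)
    (hflats : ∀ F, N.IsFlat F → M.IsFlat F) (A : Finset α) :
    N.r A ≤ M.r A := by
  induction A using Finset.induction_on with
  | empty => rw [N.r_empty, M.r_empty]
  | @insert x A hx ih =>
    by_cases hm : M.r (insert x A) = M.r A
    · have := quotient_step M N hflats A x hm
      omega
    · have h1 := M.r_le_insert A x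
      have h2 := M.insert_le A x
      have h3 := N.insert_le A x
      omega

lemma diff_mono_step (M N : MatroidRank α)
    (hflats : ∀ F, N.IsFlat F → M.IsFlat F) (A : Finset α) (x : α) :
    N.r (insert x A) + M.r A ≤ N.r A + M.r (insert x A) := by
  by_cases hm : M.r (insert x A) = M.r A
  · have := quotient_step M N hflats A x hm
    omega
  · have h1 := M.r_le_insert A x
    have h2 := M.insert_le A x
    have h3 := N.insert_le A x
    omega

lemma diff_mono (M N : MatroidRank α)
    (hflats : ∀ F, N.IsFlat F → M.IsFlat F) (A C : Finset α) :
    N.r (A ∪ C) + M.r A ≤ N.r A + M.r (A ∪ C) := by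
  induction C using Finset.induction_on with
  | empty => simp
  | @insert y C hy ih =>
    rw [Finset.union_insert]
    have h := diff_mono_step M N hflats (A ∪ C) y
    have h2 := N.r_le_insert (A ∪ C) y
    have h3 := M.r_le_insert (A ∪ C) y
    omega

end MatroidRank

/-- The intermediate matroids M_i with rank function
min{rank_N(A)+i, rank_M(A)}: each is a matroid of rank s+i, M_0 = N,
M_{r−s} = M, and for i ≤ j every flat of M_i is a flat of M_j. -/
theorem intermediate_matroids (M N : MatroidRank α)
    (hflats : ∀ F, N.IsFlat F → M.IsFlat F) :
    (∀ i, i ≤ M.r Finset.univ - N.r Finset.univ →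
      ∃ Mi : MatroidRank α, ∀ A, Mi.r A = min (N.r A + i) (M.r A)) ∧
    (∀ i, i ≤ M.r Finset.univ - N.r Finset.univ →
      min (N.r Finset.univ + i) (M.r Finset.univ) = N.r Finset.univ + i) ∧
    (∀ A, min (N.r A + 0) (M.r A) = N.r A) ∧
    (∀ A, min (N.r A + (M.r Finset.univ - N.r Finset.univ)) (M.r A) = M.r A) ∧
    (∀ i j, i ≤ j → j ≤ M.r Finset.univ - N.r Finset.univ →
      ∀ F : Finset α,
        (∀ x ∉ F, min (N.r F + i) (M.r F) < min (N.r (insert x F) + i) (M.r (insert x F))) →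
        (∀ x ∉ F, min (N.r F + j) (M.r F) < min (N.r (insert x F) + j) (M.r (insert x F)))) := by
  refine ⟨?_, ?_, ?_, ?_, ?_⟩
  · -- part 1: each M_i is a matroid
    intro i _
    refine ⟨⟨fun A => min (N.r A + i) (M.r A), ?_, ?_, ?_, ?_⟩, fun A => rfl⟩
    · simp [N.r_empty, M.r_empty]
    · intro A x
      have h1 := N.r_le_insert A x
      have h2 := M.r_le_insert A x
      omega
    · intro A x
      have h1 := N.insert_le A x
      have h2 := M.insert_le A x
      omega
    · intro A x y hx hy
      by_cases hm : M.r A < N.r A + i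
      · -- min is M.r A
        have hmx : M.r (insert x A) = M.r A := by
          have h1 := M.r_le_insert A x
          have h2 := N.r_le_insert A x
          omega
        have hmy : M.r (insert y A) = M.r A := by
          have h1 := M.r_le_insert A y
          have h2 := N.r_le_insert A y
          omega
        have hxy := M.r_local A x y hmx hmy
        have h3 := N.r_le_insert A y
        have h4 := N.r_le_insert (insert y A) x
        omega
      · -- min is N.r A + i
        have hnx : N.r (insert x A) = N.r A := by
          by_contra hc
          have h1 := N.r_le_insert A x
          have h2 := N.insert_le A x
          have h3 := M.r_le_insert A x
          have hmx : M.r (insert x A) = M.r A := by omega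
          have := MatroidRank.quotient_step M N hflats A x hmx
          omega
        have hny : N.r (insert y A) = N.r A := by
          by_contra hc
          have h1 := N.r_le_insert A y
          have h2 := N.insert_le A y
          have h3 := M.r_le_insert A y
          have hmy : M.r (insert y A) = M.r A := by omega
          have := MatroidRank.quotient_step M N hflats A y hmy
          omega
        have hxy := N.r_local A x y hnx hny
        have h3 := M.r_le_insert A y
        have h4 := M.r_le_insert (insert y A) x
        omega
  · -- part 2: rank of M_i is s + i
    intro i hi
    have := MatroidRank.N_le_M M N hflats Finset.univ
    omega
  · -- part 3: M_0 = N
    intro A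
    have := MatroidRank.N_le_M M N hflats A
    omega
  · -- part 4: M_{r-s} = M
    intro A
    have h1 := MatroidRank.diff_mono M N hflats A Finset.univ
    rw [Finset.union_eq_right.mpr (Finset.subset_univ A)] at h1
    have h2 := MatroidRank.N_le_M M N hflats Finset.univ
    have h3 := MatroidRank.N_le_M M N hflats A
    omega
  · -- part 5: flats are nested
    intro i j hij _ F hF x hx
    have h := hF x hx
    have h1 := N.r_le_insert F x
    have h2 := N.insert_le F x
    have h3 := M.r_le_insert F x
    have h4 := M.insert_le F x
    by_cases hm : M.r (insert x F) = M.r F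
    · have := MatroidRank.quotient_step M N hflats F x hm
      omega
    · omega
end

section
/- Let M be a matroid on E. For the containment of the diagonal matroid Δ_M in M ⊕ M, the intermediate matroids M_i (for 0 ≤ i ≤ r, r = rank of M) given by rank_{M_i}(A ⊔ B) = min{rank_M(A ∪ B) + i, rank_M(A) + rank_M(B)} are matroids with M_0 = Δ_M, M_r = M ⊕ M, and every flat of M_i is a flat of M_{i+1}. -/
variable {α : Type} [DecidableEq α] [Fintype α]

/-! ### Auxiliary lemmas -/

lemma MatroidRank.cl_step_s8 (M : MatroidRank α) {C : Finset α} {a : α}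
    (h : M.r (insert a C) = M.r C) (y : α) :
    M.r (insert a (insert y C)) = M.r (insert y C) := by
  have h1 := M.r_le_insert C y
  have h2 := M.insert_le C y
  rcases eq_or_lt_of_le h1 with hy | hy
  · rw [M.r_local C a y h hy.symm, ← hy]
  · have h3 : M.r (insert a (insert y C)) ≤ M.r (insert y C) := by
      rw [Finset.insert_comm]
      have := M.insert_le (insert a C) y
      omega
    have h4 := M.r_le_insert (insert y C) a
    omega

lemma MatroidRank.cl_union (M : MatroidRank α) {A : Finset α} {a : α}
    (h : M.r (insert a A) = M.r A) (B : Finset α) :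
    M.r (insert a (A ∪ B)) = M.r (A ∪ B) := by
  induction B using Finset.induction_on with
  | empty => simpa using h
  | @insert b B hb ih => rw [Finset.union_insert]; exact M.cl_step_s8 ih _

lemma MatroidRank.r_le_union_s8 (M : MatroidRank α) (A B : Finset α) :
    M.r A ≤ M.r (A ∪ B) := by
  induction B using Finset.induction_on with
  | empty => simp
  | @insert b B hb ih =>
    rw [Finset.union_insert]
    exact le_trans ih (M.r_le_insert _ _)

lemma MatroidRank.subadd (M : MatroidRank α) (A B : Finset α) :
    M.r (A ∪ B) ≤ M.r A + M.r B := by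
  induction B using Finset.induction_on with
  | empty => simp [M.r_empty]
  | @insert b B hb ih =>
    rw [Finset.union_insert]
    have h1 := M.r_le_insert B b
    have h2 := M.insert_le B b
    rcases eq_or_lt_of_le h1 with h0 | h0
    · have h3 := M.cl_union h0.symm A
      rw [Finset.union_comm B A] at h3
      omega
    · have h3 := M.insert_le (A ∪ B) b
      omega

lemma leftPart_insert_inl (a : α) (S : Finset (α ⊕ α)) :
    leftPart (insert (Sum.inl a) S) = insert a (leftPart S) := by
  ext x; simp [leftPart]

lemma rightPart_insert_inl (a : α) (S : Finset (α ⊕ α)) :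
    rightPart (insert (Sum.inl a) S) = rightPart S := by
  ext x; simp [rightPart]

lemma leftPart_insert_inr (b : α) (S : Finset (α ⊕ α)) :
    leftPart (insert (Sum.inr b) S) = leftPart S := by
  ext x; simp [leftPart]

lemma rightPart_insert_inr (b : α) (S : Finset (α ⊕ α)) :
    rightPart (insert (Sum.inr b) S) = insert b (rightPart S) := by
  ext x; simp [rightPart]

lemma leftPart_empty : leftPart (∅ : Finset (α ⊕ α)) = ∅ := by
  ext x; simp [leftPart]

lemma rightPart_empty : rightPart (∅ : Finset (α ⊕ α)) = ∅ := by
  ext x; simp [rightPart]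

lemma parts_insert (x : α ⊕ α) (S : Finset (α ⊕ α)) :
    leftPart (insert x S) ∪ rightPart (insert x S)
      = insert (Sum.elim id id x) (leftPart S ∪ rightPart S) := by
  cases x with
  | inl a =>
    rw [leftPart_insert_inl, rightPart_insert_inl, Finset.insert_union]; rfl
  | inr b =>
    rw [leftPart_insert_inr, rightPart_insert_inr, Finset.union_insert]; rfl

/-- basic increment facts together with the quotient inequality. -/
lemma key_facts (M : MatroidRank α) (x : α ⊕ α) (S : Finset (α ⊕ α)) :
    M.r (leftPart S ∪ rightPart S) ≤ M.r (leftPart (insert x S) ∪ rightPart (insert x S)) ∧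
    M.r (leftPart (insert x S) ∪ rightPart (insert x S)) ≤ M.r (leftPart S ∪ rightPart S) + 1 ∧
    M.r (leftPart S) + M.r (rightPart S)
        ≤ M.r (leftPart (insert x S)) + M.r (rightPart (insert x S)) ∧
    M.r (leftPart (insert x S)) + M.r (rightPart (insert x S))
        ≤ M.r (leftPart S) + M.r (rightPart S) + 1 ∧
    M.r (leftPart (insert x S) ∪ rightPart (insert x S)) + (M.r (leftPart S) + M.r (rightPart S))
        ≤ M.r (leftPart S ∪ rightPart S)
            + (M.r (leftPart (insert x S)) + M.r (rightPart (insert x S))) := by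
  rw [parts_insert]
  cases x with
  | inl a =>
    simp only [leftPart_insert_inl, rightPart_insert_inl, Sum.elim_inl, id_eq]
    have h1 := M.r_le_insert (leftPart S ∪ rightPart S) a
    have h2 := M.insert_le (leftPart S ∪ rightPart S) a
    have h3 := M.r_le_insert (leftPart S) a
    have h4 := M.insert_le (leftPart S) a
    refine ⟨h1, h2, by omega, by omega, ?_⟩
    rcases eq_or_lt_of_le h3 with h0 | h0
    · have h5 := M.cl_union h0.symm (rightPart S)
      omega
    · omega
  | inr b =>
    simp only [leftPart_insert_inr, rightPart_insert_inr, Sum.elim_inr, id_eq]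
    have h1 := M.r_le_insert (leftPart S ∪ rightPart S) b
    have h2 := M.insert_le (leftPart S ∪ rightPart S) b
    have h3 := M.r_le_insert (rightPart S) b
    have h4 := M.insert_le (rightPart S) b
    refine ⟨h1, h2, by omega, by omega, ?_⟩
    rcases eq_or_lt_of_le h3 with h0 | h0
    · have h5 := M.cl_union h0.symm (leftPart S)
      rw [Finset.union_comm (rightPart S) (leftPart S)] at h5
      omega
    · omega

lemma g_local (M : MatroidRank α) (S : Finset (α ⊕ α)) (x y : α ⊕ α)
    (hx : M.r (leftPart (insert x S) ∪ rightPart (insert x S)) = M.r (leftPart S ∪ rightPart S))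
    (hy : M.r (leftPart (insert y S) ∪ rightPart (insert y S)) = M.r (leftPart S ∪ rightPart S)) :
    M.r (leftPart (insert x (insert y S)) ∪ rightPart (insert x (insert y S)))
      = M.r (leftPart S ∪ rightPart S) := by
  rw [parts_insert] at hx hy
  rw [parts_insert, parts_insert]
  exact M.r_local _ _ _ hx hy

lemma h_local (M : MatroidRank α) (S : Finset (α ⊕ α)) (x y : α ⊕ α)
    (hx : M.r (leftPart (insert x S)) + M.r (rightPart (insert x S))
        = M.r (leftPart S) + M.r (rightPart S))
    (hy : M.r (leftPart (insert y S)) + M.r (rightPart (insert y S))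
        = M.r (leftPart S) + M.r (rightPart S)) :
    M.r (leftPart (insert x (insert y S))) + M.r (rightPart (insert x (insert y S)))
      = M.r (leftPart S) + M.r (rightPart S) := by
  cases x with
  | inl a =>
    cases y with
    | inl c =>
      simp only [leftPart_insert_inl, rightPart_insert_inl] at hx hy ⊢
      have h1 : M.r (insert a (leftPart S)) = M.r (leftPart S) := by omega
      have h2 : M.r (insert c (leftPart S)) = M.r (leftPart S) := by omega
      rw [M.r_local _ _ _ h1 h2]
    | inr d =>
      simp only [leftPart_insert_inl, rightPart_insert_inl, leftPart_insert_inr,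
        rightPart_insert_inr] at hx hy ⊢
      omega
  | inr b =>
    cases y with
    | inl c =>
      simp only [leftPart_insert_inl, rightPart_insert_inl, leftPart_insert_inr,
        rightPart_insert_inr] at hx hy ⊢
      omega
    | inr d =>
      simp only [leftPart_insert_inr, rightPart_insert_inr] at hx hy ⊢
      have h1 : M.r (insert b (rightPart S)) = M.r (rightPart S) := by omega
      have h2 : M.r (insert d (rightPart S)) = M.r (rightPart S) := by omega
      rw [M.r_local _ _ _ h1 h2]

lemma min_local (M : MatroidRank α) (i : ℕ) (S : Finset (α ⊕ α)) (x y : α ⊕ α)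
    (hx : min (M.r (leftPart (insert x S) ∪ rightPart (insert x S)) + i)
            (M.r (leftPart (insert x S)) + M.r (rightPart (insert x S)))
          = min (M.r (leftPart S ∪ rightPart S) + i) (M.r (leftPart S) + M.r (rightPart S)))
    (hy : min (M.r (leftPart (insert y S) ∪ rightPart (insert y S)) + i)
            (M.r (leftPart (insert y S)) + M.r (rightPart (insert y S)))
          = min (M.r (leftPart S ∪ rightPart S) + i) (M.r (leftPart S) + M.r (rightPart S))) :
    min (M.r (leftPart (insert x (insert y S)) ∪ rightPart (insert x (insert y S))) + i)
        (M.r (leftPart (insert x (insert y S))) + M.r (rightPart (insert x (insert y S))))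
      = min (M.r (leftPart S ∪ rightPart S) + i) (M.r (leftPart S) + M.r (rightPart S)) := by
  obtain ⟨bx1, bx2, bx3, bx4, bx5⟩ := key_facts M x S
  obtain ⟨by1, by2, by3, by4, by5⟩ := key_facts M y S
  obtain ⟨cx1, cx2, cx3, cx4, cx5⟩ := key_facts M x (insert y S)
  by_cases hc : M.r (leftPart S ∪ rightPart S) + i ≤ M.r (leftPart S) + M.r (rightPart S)
  · have hgx : M.r (leftPart (insert x S) ∪ rightPart (insert x S))
        = M.r (leftPart S ∪ rightPart S) := by omega
    have hgy : M.r (leftPart (insert y S) ∪ rightPart (insert y S))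
        = M.r (leftPart S ∪ rightPart S) := by omega
    have hgxy := g_local M S x y hgx hgy
    omega
  · have hhx : M.r (leftPart (insert x S)) + M.r (rightPart (insert x S))
        = M.r (leftPart S) + M.r (rightPart S) := by omega
    have hhy : M.r (leftPart (insert y S)) + M.r (rightPart (insert y S))
        = M.r (leftPart S) + M.r (rightPart S) := by omega
    have hhxy := h_local M S x y hhx hhy
    omega

/-- The intermediate matroids between Δ_M and M ⊕ M: the functions
A ⊔ B ↦ min{rank_M(A ∪ B) + i, rank_M(A) + rank_M(B)} are matroid rank functions,
with M_0 = Δ_M, M_r = M ⊕ M, and every flat of M_i is a flat of M_{i+1}. -/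
theorem diagonal_intermediate_matroids (M : MatroidRank α) :
    (∀ i, i ≤ M.r Finset.univ →
      ∃ Mi : MatroidRank (α ⊕ α), ∀ S : Finset (α ⊕ α),
        Mi.r S = min (M.r (leftPart S ∪ rightPart S) + i)
          (M.r (leftPart S) + M.r (rightPart S))) ∧
    (∀ S : Finset (α ⊕ α),
      min (M.r (leftPart S ∪ rightPart S) + 0)
          (M.r (leftPart S) + M.r (rightPart S))
        = M.r (leftPart S ∪ rightPart S)) ∧
    (∀ S : Finset (α ⊕ α),
      min (M.r (leftPart S ∪ rightPart S) + M.r Finset.univ)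
          (M.r (leftPart S) + M.r (rightPart S))
        = M.r (leftPart S) + M.r (rightPart S)) ∧
    (∀ i, i + 1 ≤ M.r Finset.univ →
      ∀ S : Finset (α ⊕ α),
        (∀ x ∉ S,
          min (M.r (leftPart S ∪ rightPart S) + i) (M.r (leftPart S) + M.r (rightPart S))
            < min (M.r (leftPart (insert x S) ∪ rightPart (insert x S)) + i)
                (M.r (leftPart (insert x S)) + M.r (rightPart (insert x S)))) →
        (∀ x ∉ S,
          min (M.r (leftPart S ∪ rightPart S) + (i+1)) (M.r (leftPart S) + M.r (rightPart S))
            < min (M.r (leftPart (insert x S) ∪ rightPart (insert x S)) + (i+1))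
                (M.r (leftPart (insert x S)) + M.r (rightPart (insert x S))))) := by
  refine ⟨?_, ?_, ?_, ?_⟩
  · intro i _
    refine ⟨⟨fun S => min (M.r (leftPart S ∪ rightPart S) + i)
        (M.r (leftPart S) + M.r (rightPart S)), ?_, ?_, ?_, ?_⟩, fun S => rfl⟩
    · simp [leftPart_empty, rightPart_empty, M.r_empty]
    · intro S x
      obtain ⟨b1, b2, b3, b4, b5⟩ := key_facts M x S
      omega
    · intro S x
      obtain ⟨b1, b2, b3, b4, b5⟩ := key_facts M x S
      omega
    · intro S x y hx hy
      exact min_local M i S x y hx hy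
  · intro S
    have h := M.subadd (leftPart S) (rightPart S)
    omega
  · intro S
    have h1 := M.r_le_union_s8 (leftPart S) (rightPart S)
    have h2 : M.r (rightPart S) ≤ M.r Finset.univ := by
      have h3 := M.r_le_union_s8 (rightPart S) Finset.univ
      rw [Finset.union_eq_right.2 (Finset.subset_univ _)] at h3; exact h3
    omega
  · intro i _ S hS x hxS
    obtain ⟨b1, b2, b3, b4, b5⟩ := key_facts M x S
    have h := hS x hxS
    omega
end

section
/- Let p ∈ ℝ^E and let M be a matroid on the finite set E. Define M_p as the matroid whose bases are the bases B of M minimizing the weight Σ_{i∈B} p_i. Then for any vector v ∈ ℝ^E there exists ε₀ > 0 such that for all 0 < ε < ε₀, the matroid M_{p+εv} equals (M_p)_v. -/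
variable {α : Type} [DecidableEq α] [Fintype α]

/-- `B` is a basis of `M`: an independent set of full rank. -/
def MatroidRank.IsBase (M : MatroidRank α) (B : Finset α) : Prop :=
  M.r B = B.card ∧ M.r B = M.r Finset.univ

/-- The weight of a finite set with respect to the weight vector `p`. -/
def wt (p : α → ℝ) (B : Finset α) : ℝ := ∑ i ∈ B, p i

/-- `B` is a basis of the matroid `M_p`, i.e. a basis of `M` of minimal `p`-weight. -/
def MatroidRank.IsMinBase (M : MatroidRank α) (p : α → ℝ) (B : Finset α) : Prop :=
  M.IsBase B ∧ ∀ B₂, M.IsBase B₂ → wt p B ≤ wt p B₂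

/-- For small ε > 0, the matroid M_{p+εv} equals (M_p)_v : its bases are the
v-minimal bases among the p-minimal bases of M. -/
theorem min_weight_base_perturbation (M : MatroidRank α) (p v : α → ℝ) :
    ∃ ε₀ > (0:ℝ), ∀ ε : ℝ, 0 < ε → ε < ε₀ →
      ∀ B : Finset α,
        M.IsMinBase (fun i => p i + ε * v i) B ↔
          (M.IsMinBase p B ∧ ∀ B₂, M.IsMinBase p B₂ → wt v B ≤ wt v B₂) := by
  classical
  set f : Finset α × Finset α → ℝ :=
    fun q => (wt p q.2 - wt p q.1) / (|wt v q.1 - wt v q.2| + 1) with hf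
  set T : Finset ℝ :=
    insert 1 ((Finset.univ.filter
      (fun q : Finset α × Finset α => wt p q.1 < wt p q.2)).image f) with hT
  have hTne : T.Nonempty := ⟨1, Finset.mem_insert_self _ _⟩
  refine ⟨T.min' hTne, ?_, ?_⟩
  · rw [gt_iff_lt, Finset.lt_min'_iff]
    intro y hy
    rw [hT, Finset.mem_insert] at hy
    rcases hy with rfl | hy
    · norm_num
    · obtain ⟨q, hq, rfl⟩ := Finset.mem_image.mp hy
      rw [Finset.mem_filter] at hq
      have h1 : 0 < wt p q.2 - wt p q.1 := by linarith [hq.2]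
      have h2 : 0 < |wt v q.1 - wt v q.2| + 1 := by positivity
      exact div_pos h1 h2
  intro ε hε hε' B
  have hwt : ∀ C : Finset α, wt (fun i => p i + ε * v i) C = wt p C + ε * wt v C := by
    intro C; simp [wt, Finset.sum_add_distrib, Finset.mul_sum]
  have key : ∀ B₁ B₂ : Finset α, wt p B₁ < wt p B₂ →
      wt p B₁ + ε * wt v B₁ < wt p B₂ + ε * wt v B₂ := by
    intro B₁ B₂ hlt
    have hmem : f (B₁, B₂) ∈ T := by
      rw [hT]
      exact Finset.mem_insert_of_mem
        (Finset.mem_image_of_mem f (Finset.mem_filter.mpr ⟨Finset.mem_univ _, hlt⟩))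
    have hεf : ε < f (B₁, B₂) := lt_of_lt_of_le hε' (Finset.min'_le _ _ hmem)
    have hd : 0 < |wt v B₁ - wt v B₂| + 1 := by positivity
    have h2 : ε * (|wt v B₁ - wt v B₂| + 1) < wt p B₂ - wt p B₁ := by
      have := (lt_div_iff₀ hd).mp hεf
      simpa [hf] using this
    have habs : ε * (wt v B₁ - wt v B₂) ≤ ε * |wt v B₁ - wt v B₂| :=
      mul_le_mul_of_nonneg_left (le_abs_self _) hε.le
    nlinarith [abs_nonneg (wt v B₁ - wt v B₂)]
  constructor
  · rintro ⟨hB, hmin⟩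
    have hpmin : ∀ B₂, M.IsBase B₂ → wt p B ≤ wt p B₂ := by
      intro B₂ hB₂
      by_contra h
      push_neg at h
      have := hmin B₂ hB₂
      rw [hwt, hwt] at this
      exact absurd this (not_le.mpr (key B₂ B h))
    refine ⟨⟨hB, hpmin⟩, ?_⟩
    rintro B₂ ⟨hB₂, hB₂min⟩
    have h1 : wt p B = wt p B₂ := le_antisymm (hpmin B₂ hB₂) (hB₂min B hB)
    have := hmin B₂ hB₂
    rw [hwt, hwt, h1] at this
    have : ε * wt v B ≤ ε * wt v B₂ := by linarith
    exact le_of_mul_le_mul_left (by linarith) hε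
  · rintro ⟨⟨hB, hpmin⟩, hvmin⟩
    refine ⟨hB, ?_⟩
    intro B₂ hB₂
    rw [hwt, hwt]
    rcases lt_or_ge (wt p B) (wt p B₂) with h | h
    · exact (key B B₂ h).le
    · have h1 : wt p B = wt p B₂ := le_antisymm (hpmin B₂ hB₂) h
      have h2 : M.IsMinBase p B₂ := ⟨hB₂, fun B₃ hB₃ => h1 ▸ hpmin B₃ hB₃⟩
      have := hvmin B₂ h2
      nlinarith
end
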